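/- arXiv:2205.12661 — 3 statements merged into one kernel-verified Lean document; each statement's English description precedes it below -/
import Mathlib

section
/- Let U ⊂ ℝⁿ be open, f : U → ℝⁿ be C², and x₀ ∈ U with Df(x₀) invertible. Set M = ‖(Df(x₀))⁻¹‖, and for R > 0 with B(x₀,R) ⊂ U let K be an upper bound for ‖D²f(x)‖ on B(x₀,R). Define P = min{1/(MK), R} and P' = P(2 − MKP)/(2M). Then for every y ∈ B(f(x₀), P') there exists a unique x ∈ B(x₀, P) with f(x) = y. -/
open Metric

open Set in
lemma quad_bound {E F : Type*} [NormedAddCommGroup E] [NormedSpace ℝ E]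
    [NormedAddCommGroup F] [NormedSpace ℝ F]
    {g : E → F} {g' : E → E →L[ℝ] F} {x₀ x : E} {C : ℝ}
    (hd : ∀ z ∈ segment ℝ x₀ x, HasFDerivAt g (g' z) z)
    (hb : ∀ z ∈ segment ℝ x₀ x, ‖g' z‖ ≤ C * ‖z - x₀‖) :
    ‖g x - g x₀‖ ≤ C * ‖x - x₀‖ ^ 2 / 2 := by
  set v := x - x₀ with hv
  have hmem : ∀ t ∈ Icc (0:ℝ) 1, x₀ + t • v ∈ segment ℝ x₀ x := by
    intro t ht
    rw [segment_eq_image']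
    exact ⟨t, ht, rfl⟩
  set φ : ℝ → F := fun t => g (x₀ + t • v) - g x₀ with hφ
  have hder : ∀ t ∈ Icc (0:ℝ) 1, HasDerivAt φ (g' (x₀ + t • v) v) t := by
    intro t ht
    have h1 : HasDerivAt (fun t : ℝ => x₀ + t • v) v t := by
      simpa using ((hasDerivAt_id t).smul_const v).const_add x₀
    exact (((hd _ (hmem t ht)).comp_hasDerivAt t h1).sub_const (g x₀))
  have key : ∀ t ∈ Icc (0:ℝ) 1, ‖φ t‖ ≤ C * ‖v‖ ^ 2 * t ^ 2 / 2 := by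
    have hcont : ContinuousOn φ (Icc 0 1) := fun t ht =>
      (hder t ht).continuousAt.continuousWithinAt
    have hder' : ∀ t ∈ Ico (0:ℝ) 1, HasDerivWithinAt φ (g' (x₀ + t • v) v) (Ici t) t :=
      fun t ht => (hder t (Ico_subset_Icc_self ht)).hasDerivWithinAt
    have ha : ‖φ 0‖ ≤ C * ‖v‖ ^ 2 * (0:ℝ) ^ 2 / 2 := by simp [hφ]
    have hB : ∀ t : ℝ, HasDerivAt (fun t => C * ‖v‖ ^ 2 * t ^ 2 / 2) (C * ‖v‖ ^ 2 * t) t := by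
      intro t
      have := ((hasDerivAt_pow 2 t).const_mul (C * ‖v‖ ^ 2)).div_const 2
      refine this.congr_deriv ?_
      norm_num
      ring
    have hbound : ∀ t ∈ Ico (0:ℝ) 1, ‖g' (x₀ + t • v) v‖ ≤ C * ‖v‖ ^ 2 * t := by
      intro t ht
      have h1 : ‖g' (x₀ + t • v) v‖ ≤ ‖g' (x₀ + t • v)‖ * ‖v‖ :=
        ContinuousLinearMap.le_opNorm _ _
      have h2 : ‖g' (x₀ + t • v)‖ ≤ C * ‖t • v‖ := by
        simpa using hb _ (hmem t (Ico_subset_Icc_self ht))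
      have h3 : ‖t • v‖ = t * ‖v‖ := by
        rw [norm_smul, Real.norm_eq_abs, abs_of_nonneg ht.1]
      calc ‖g' (x₀ + t • v) v‖ ≤ (C * ‖t • v‖) * ‖v‖ :=
            h1.trans (mul_le_mul_of_nonneg_right h2 (norm_nonneg _))
        _ = C * ‖v‖ ^ 2 * t := by rw [h3]; ring
    exact image_norm_le_of_norm_deriv_right_le_deriv_boundary hcont hder' ha hB hbound
  have := key 1 ⟨zero_le_one, le_refl 1⟩
  simpa [hφ, hv] using this

set_option maxHeartbeats 1600000 in
/-- Quantitative inverse function theorem for `C²` maps (Corollary 3.5 of the paper):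
with `P = min (1/(M K)) R` and `P' = P(2 - MKP)/(2M)`, every `y ∈ B(f x₀, P')` has a
unique preimage in `B(x₀, P)`. -/
theorem statement_2 {n : ℕ}
    {U : Set (Fin n → ℝ)} (hU : IsOpen U)
    {f : (Fin n → ℝ) → (Fin n → ℝ)} (hf : ContDiffOn ℝ 2 f U)
    {x₀ : Fin n → ℝ} (hx₀ : x₀ ∈ U)
    (A : (Fin n → ℝ) ≃L[ℝ] (Fin n → ℝ))
    (hA : (A : (Fin n → ℝ) →L[ℝ] (Fin n → ℝ)) = fderiv ℝ f x₀)
    (M : ℝ) (hM : M = ‖(A.symm : (Fin n → ℝ) →L[ℝ] (Fin n → ℝ))‖)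
    (R : ℝ) (hR : 0 < R) (hball : ball x₀ R ⊆ U)
    (K : ℝ)
    (hK : ∀ x ∈ ball x₀ R, ∀ u v : Fin n → ℝ,
      ‖fderiv ℝ (fderiv ℝ f) x u v‖ ≤ K * ‖u‖ * ‖v‖)
    (P P' : ℝ) (hP : P = min (1 / (M * K)) R)
    (hP' : P' = P * (2 - M * K * P) / (2 * M)) :
    ∀ y ∈ ball (f x₀) P', ∃! x, x ∈ ball x₀ P ∧ f x = y := by
  intro y hy
  have hd : dist y (f x₀) < P' := mem_ball.mp hy
  have hdn : 0 ≤ dist y (f x₀) := dist_nonneg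
  have hP'pos : 0 < P' := lt_of_le_of_lt hdn hd
  have hM0 : 0 ≤ M := hM ▸ norm_nonneg _
  -- M > 0
  have hMpos : 0 < M := by
    rcases hM0.eq_or_lt with h | h
    · exfalso
      rw [← h] at hP hP'
      simp only [zero_mul, div_zero, one_div, inv_zero] at hP
      rw [min_eq_left hR.le] at hP
      rw [hP] at hP'
      simp at hP'
      linarith
    · exact h
  -- K > 0
  have hKpos : 0 < K := by
    by_contra hK0
    push_neg at hK0
    rcases hK0.eq_or_lt with h | h
    · rw [h] at hP hP'
      simp only [mul_zero, div_zero] at hP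
      rw [min_eq_left hR.le] at hP
      rw [hP] at hP'
      simp at hP'
      linarith
    · have hMKneg : M * K < 0 := mul_neg_of_pos_of_neg hMpos h
      have h1 : (1 : ℝ) / (M * K) < 0 := div_neg_of_pos_of_neg one_pos hMKneg
      have hPeq : P = 1 / (M * K) := by
        rw [hP, min_eq_left (le_of_lt (h1.trans hR))]
      have hMKP : M * K * P = 1 := by
        rw [hPeq, mul_one_div, div_self (ne_of_lt hMKneg)]
      rw [hMKP] at hP'
      have hPneg : P < 0 := hPeq ▸ h1
      have : P' < 0 := by
        rw [hP']
        apply div_neg_of_neg_of_pos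
        · nlinarith
        · linarith
      linarith
  have hMK : 0 < M * K := mul_pos hMpos hKpos
  have hPpos : 0 < P := by
    rw [hP]; exact lt_min (by positivity) hR
  have hPR : P ≤ R := hP ▸ min_le_right _ _
  have hMKP : M * K * P ≤ 1 := by
    rw [hP]
    calc M * K * min (1 / (M * K)) R ≤ M * K * (1 / (M * K)) :=
          mul_le_mul_of_nonneg_left (min_le_left _ _) hMK.le
      _ = 1 := by field_simp
  -- derivatives of f
  have hfd : ∀ z ∈ U, HasFDerivAt f (fderiv ℝ f z) z := fun z hz =>
    ((hf.contDiffAt (hU.mem_nhds hz)).differentiableAt two_ne_zero).hasFDerivAt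
  have hDfd : ∀ z ∈ U, HasFDerivAt (fderiv ℝ f) (fderiv ℝ (fderiv ℝ f) z) z := by
    intro z hz
    have h2 : ContDiffAt ℝ 2 f z := hf.contDiffAt (hU.mem_nhds hz)
    have h1 : ContDiffAt ℝ 1 (fderiv ℝ f) z := h2.fderiv_right (by norm_num)
    exact (h1.differentiableAt one_ne_zero).hasFDerivAt
  have hK' : ∀ z ∈ ball x₀ R, ‖fderiv ℝ (fderiv ℝ f) z‖ ≤ K := fun z hz =>
    ContinuousLinearMap.opNorm_le_bound _ hKpos.le fun u =>
      ContinuousLinearMap.opNorm_le_bound _ (by positivity) fun v => hK z hz u v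
  -- Lipschitz bound for Df
  have hDf_lip : ∀ z ∈ ball x₀ R, ‖fderiv ℝ f z - fderiv ℝ f x₀‖ ≤ K * ‖z - x₀‖ := by
    intro z hz
    exact (convex_ball x₀ R).norm_image_sub_le_of_norm_hasFDerivWithin_le
      (fun w hw => (hDfd w (hball hw)).hasFDerivWithinAt)
      (fun w hw => hK' w hw) (mem_ball_self hR) hz
  -- the Newton-type map g
  set g : (Fin n → ℝ) → (Fin n → ℝ) := fun x => x + A.symm (y - f x) with hg
  set g' : (Fin n → ℝ) → (Fin n → ℝ) →L[ℝ] (Fin n → ℝ) := fun z =>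
    ContinuousLinearMap.id ℝ _ - (A.symm : (Fin n → ℝ) →L[ℝ] (Fin n → ℝ)).comp (fderiv ℝ f z) with hg'
  have hgd : ∀ z ∈ U, HasFDerivAt g (g' z) z := by
    intro z hz
    have h1 : HasFDerivAt (fun x => y - f x)
        ((0 : (Fin n → ℝ) →L[ℝ] (Fin n → ℝ)) - fderiv ℝ f z) z :=
      (hasFDerivAt_const y z).sub (hfd z hz)
    have h2 := ((A.symm : (Fin n → ℝ) →L[ℝ] (Fin n → ℝ)).hasFDerivAt (x := y - f z)).comp z h1
    have h3 := (hasFDerivAt_id z).add h2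
    refine h3.congr_fderiv ?_
    ext u
    simp [hg', sub_eq_add_neg]
  -- bound on g'
  have hg'le : ∀ z ∈ ball x₀ R, ‖g' z‖ ≤ M * K * ‖z - x₀‖ := by
    intro z hz
    have heq : g' z = (A.symm : (Fin n → ℝ) →L[ℝ] (Fin n → ℝ)).comp
        ((A : (Fin n → ℝ) →L[ℝ] (Fin n → ℝ)) - fderiv ℝ f z) := by
      ext u
      simp [hg']
    rw [heq]
    calc ‖(A.symm : (Fin n → ℝ) →L[ℝ] (Fin n → ℝ)).comp ((A : (Fin n → ℝ) →L[ℝ] (Fin n → ℝ)) - fderiv ℝ f z)‖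
        ≤ ‖(A.symm : (Fin n → ℝ) →L[ℝ] (Fin n → ℝ))‖ * ‖(A : (Fin n → ℝ) →L[ℝ] (Fin n → ℝ)) - fderiv ℝ f z‖ :=
          ContinuousLinearMap.opNorm_comp_le _ _
      _ = M * ‖fderiv ℝ f z - fderiv ℝ f x₀‖ := by
          rw [hM, hA, norm_sub_rev]
      _ ≤ M * (K * ‖z - x₀‖) := mul_le_mul_of_nonneg_left (hDf_lip z hz) hM0
      _ = M * K * ‖z - x₀‖ := by ring
  -- Lipschitz estimate for g on closed balls
  have hlip : ∀ ρ : ℝ, ρ < R → ∀ x₁ ∈ closedBall x₀ ρ, ∀ x₂ ∈ closedBall x₀ ρ,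
      ‖g x₁ - g x₂‖ ≤ (M * K * ρ) * ‖x₁ - x₂‖ := by
    intro ρ hρR x₁ h1 x₂ h2
    have hsub : closedBall x₀ ρ ⊆ ball x₀ R := fun w hw =>
      mem_ball.mpr (lt_of_le_of_lt (mem_closedBall.mp hw) hρR)
    exact (convex_closedBall x₀ ρ).norm_image_sub_le_of_norm_hasFDerivWithin_le
      (fun w hw => (hgd w (hball (hsub hw))).hasFDerivWithinAt)
      (fun w hw => (hg'le w (hsub hw)).trans (by
        have : ‖w - x₀‖ ≤ ρ := by
          rw [← dist_eq_norm]; exact mem_closedBall.mp hw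
        nlinarith [hMK.le])) h2 h1
  -- choice of radius r
  obtain ⟨d, hdd⟩ : ∃ d : ℝ, d = dist y (f x₀) := ⟨_, rfl⟩
  have hd2 : d < P' := hdd ▸ hd
  have hdn2 : 0 ≤ d := hdd ▸ hdn
  have hMP' : M * P' = P - M * K * P ^ 2 / 2 := by
    rw [hP']; field_simp
  obtain ⟨r, hr0, hrP, hkey⟩ :
      ∃ r : ℝ, 0 < r ∧ r < P ∧ M * d + M * K * r ^ 2 / 2 ≤ r := by
    refine ⟨P - min (P / 2) (M * (P' - d) / 2), ?_, ?_, ?_⟩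
    · have h1 : min (P / 2) (M * (P' - d) / 2) ≤ P / 2 := min_le_left _ _
      linarith
    · have h2 : 0 < min (P / 2) (M * (P' - d) / 2) :=
        lt_min (by linarith) (by nlinarith [mul_pos hMpos (show (0:ℝ) < P' - d by linarith)])
      linarith
    · have h1 : min (P / 2) (M * (P' - d) / 2) ≤ P / 2 := min_le_left _ _
      have h2 : min (P / 2) (M * (P' - d) / 2) ≤ M * (P' - d) / 2 := min_le_right _ _
      have h3 : 0 < min (P / 2) (M * (P' - d) / 2) :=
        lt_min (by linarith) (by nlinarith [mul_pos hMpos (show (0:ℝ) < P' - d by linarith)])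
      nlinarith [sq_nonneg (P - min (P / 2) (M * (P' - d) / 2)), hMK.le,
        mul_nonneg hMK.le (mul_nonneg (show (0:ℝ) ≤ min (P / 2) (M * (P' - d) / 2) by linarith)
          (show (0:ℝ) ≤ 2 * P - min (P / 2) (M * (P' - d) / 2) by linarith))]
  have hrR : r < R := lt_of_lt_of_le hrP hPR
  -- fixed point setup
  have hgx₀ : g x₀ - x₀ = A.symm (y - f x₀) := by simp [hg]
  have hgx₀n : ‖g x₀ - x₀‖ ≤ M * d := by
    rw [hgx₀, hM, hdd, dist_eq_norm]
    exact (A.symm : (Fin n → ℝ) →L[ℝ] (Fin n → ℝ)).le_opNorm _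
  have hquad : ∀ x ∈ closedBall x₀ r, ‖g x - g x₀‖ ≤ M * K * ‖x - x₀‖ ^ 2 / 2 := by
    intro x hx
    have hseg : segment ℝ x₀ x ⊆ closedBall x₀ r :=
      (convex_closedBall x₀ r).segment_subset (mem_closedBall_self hr0.le) hx
    have hsub : closedBall x₀ r ⊆ ball x₀ R := fun w hw =>
      mem_ball.mpr (lt_of_le_of_lt (mem_closedBall.mp hw) hrR)
    exact quad_bound (fun z hz => hgd z (hball (hsub (hseg hz))))
      (fun z hz => hg'le z (hsub (hseg hz)))
  have hmaps : Set.MapsTo g (closedBall x₀ r) (closedBall x₀ r) := by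
    intro x hx
    have hxn : ‖x - x₀‖ ≤ r := by rw [← dist_eq_norm]; exact mem_closedBall.mp hx
    have h1 := hquad x hx
    have htri : dist (g x) x₀ ≤ ‖g x - g x₀‖ + ‖g x₀ - x₀‖ := by
      rw [show ‖g x - g x₀‖ = dist (g x) (g x₀) from (dist_eq_norm _ _).symm,
        show ‖g x₀ - x₀‖ = dist (g x₀) x₀ from (dist_eq_norm _ _).symm]
      exact dist_triangle _ _ _
    have hsq : ‖x - x₀‖ ^ 2 ≤ r ^ 2 := pow_le_pow_left₀ (norm_nonneg _) hxn 2
    have h4 : M * K * ‖x - x₀‖ ^ 2 / 2 ≤ M * K * r ^ 2 / 2 := by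
      have := mul_le_mul_of_nonneg_left hsq hMK.le
      linarith
    have : dist (g x) x₀ ≤ r := by linarith
    exact mem_closedBall.mpr this
  -- contraction
  set c : NNReal := ⟨M * K * r, by positivity⟩ with hc
  have hclt : c < 1 := by
    rw [← NNReal.coe_lt_coe, NNReal.coe_one]
    show M * K * r < (1 : ℝ)
    calc M * K * r < M * K * P := mul_lt_mul_of_pos_left hrP hMK
      _ ≤ 1 := hMKP
  have hlipr : LipschitzOnWith c g (closedBall x₀ r) := by
    rw [lipschitzOnWith_iff_norm_sub_le]
    intro x₁ h1 x₂ h2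
    exact hlip r hrR x₁ h1 x₂ h2
  have hcontr : ContractingWith c (hmaps.restrict g _ _) :=
    ⟨hclt, hlipr.mapsToRestrict hmaps⟩
  obtain ⟨x, hxmem, hxfix, -, -⟩ := ContractingWith.exists_fixedPoint'
    (isClosed_closedBall (x := x₀) (ε := r)).isComplete hmaps hcontr (mem_closedBall_self hr0.le)
    (edist_ne_top _ _)
  have hfx : f x = y := by
    have h0 : x + A.symm (y - f x) = x := hxfix
    have h1 : A.symm (y - f x) = 0 := by
      have := congrArg (· - x) h0
      simpa [add_sub_cancel_left] using this
    have h2 : y - f x = 0 := by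
      have h3 : A.symm (y - f x) = A.symm 0 := by rw [h1]; simp
      exact A.symm.injective h3
    exact (sub_eq_zero.mp h2).symm
  have hxball : x ∈ ball x₀ P :=
    mem_ball.mpr (lt_of_le_of_lt (mem_closedBall.mp hxmem) hrP)
  refine ⟨x, ⟨hxball, hfx⟩, ?_⟩
  rintro x' ⟨hx'ball, hfx'⟩
  have hfixpt : ∀ w, f w = y → g w = w := by
    intro w hw
    simp [hg, hw]
  set ρ := max (dist x' x₀) (dist x x₀) with hρ
  have hρP : ρ < P := max_lt (mem_ball.mp hx'ball) (mem_ball.mp hxball)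
  have hρR : ρ < R := lt_of_lt_of_le hρP hPR
  have hρ0 : 0 ≤ ρ := le_max_of_le_left dist_nonneg
  have h1 : x' ∈ closedBall x₀ ρ := mem_closedBall.mpr (le_max_left _ _)
  have h2 : x ∈ closedBall x₀ ρ := mem_closedBall.mpr (le_max_right _ _)
  have hl := hlip ρ hρR x' h1 x h2
  rw [hfixpt x' hfx', hfixpt x hfx] at hl
  have hlt1 : M * K * ρ < 1 := lt_of_lt_of_le (by nlinarith) hMKP
  have hzero : ‖x' - x‖ = 0 :=
    le_antisymm (by nlinarith [norm_nonneg (x' - x)]) (norm_nonneg _)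
  exact sub_eq_zero.mp (norm_eq_zero.mp hzero)
end

section
/- Let f : U × V → ℝᵐ be C¹ on open sets U ⊂ ℝⁿ, V ⊂ ℝᵐ with ∂f/∂y(x₀,y₀) invertible. Set M_y = ‖(∂f/∂y(x₀,y₀))⁻¹‖, L_x = ‖∂f/∂x(x₀,y₀)‖, and define K_x(r_x) = sup{‖∂f/∂x(x,y₀) − ∂f/∂x(x₀,y₀)‖ : x ∈ B(x₀,r_x)} and K_y(r_x,r_y) = sup{‖∂f/∂y(x,y) − ∂f/∂y(x₀,y₀)‖ : (x,y) ∈ B(x₀,r_x) × B(y₀,r_y)}. If r_x, r_y > 0 satisfy K_x(r_x) r_x + K_y(r_x,r_y) r_y < r_y/M_y − L_x r_x and M_y K_y(r_x,r_y) < 1, then for each x ∈ B(x₀,r_x) there is a unique y_x ∈ B(y₀,r_y) with f(x,y_x) = f(x₀,y₀). -/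
open Metric ContinuousLinearMap

set_option maxHeartbeats 1000000

/-- Quantitative implicit function theorem for `C¹` maps (Corollary 3.8 of the paper),
with bounds `K_x, K_y` on the moduli of continuity of the first partial derivatives. -/
theorem statement_6 {n m : ℕ}
    {U : Set (Fin n → ℝ)} {V : Set (Fin m → ℝ)} (hU : IsOpen U) (hV : IsOpen V)
    {f : (Fin n → ℝ) × (Fin m → ℝ) → (Fin m → ℝ)}
    (hf : ContDiffOn ℝ 1 f (U ×ˢ V))
    {x₀ : Fin n → ℝ} {y₀ : Fin m → ℝ} (hx₀ : x₀ ∈ U) (hy₀ : y₀ ∈ V)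
    (A : (Fin m → ℝ) ≃L[ℝ] (Fin m → ℝ))
    (hA : (A : (Fin m → ℝ) →L[ℝ] (Fin m → ℝ)) =
      (fderiv ℝ f (x₀, y₀)).comp (inr ℝ (Fin n → ℝ) (Fin m → ℝ)))
    (My Lx : ℝ)
    (hMy : My = ‖(A.symm : (Fin m → ℝ) →L[ℝ] (Fin m → ℝ))‖)
    (hLx : Lx = ‖(fderiv ℝ f (x₀, y₀)).comp (inl ℝ (Fin n → ℝ) (Fin m → ℝ))‖)
    (rx ry : ℝ) (hrx : 0 < rx) (hry : 0 < ry)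
    (hballx : ball x₀ rx ⊆ U) (hbally : ball y₀ ry ⊆ V)
    (Kx Ky : ℝ)
    (hKx : ∀ x ∈ ball x₀ rx,
      ‖(fderiv ℝ f (x, y₀)).comp (inl ℝ (Fin n → ℝ) (Fin m → ℝ)) -
        (fderiv ℝ f (x₀, y₀)).comp (inl ℝ (Fin n → ℝ) (Fin m → ℝ))‖ ≤ Kx)
    (hKy : ∀ p ∈ ball x₀ rx ×ˢ ball y₀ ry,
      ‖(fderiv ℝ f p).comp (inr ℝ (Fin n → ℝ) (Fin m → ℝ)) -
        (fderiv ℝ f (x₀, y₀)).comp (inr ℝ (Fin n → ℝ) (Fin m → ℝ))‖ ≤ Ky)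
    (hineq1 : Kx * rx + Ky * ry < ry / My - Lx * rx)
    (hineq2 : My * Ky < 1) :
    ∀ x ∈ ball x₀ rx, ∃! y, y ∈ ball y₀ ry ∧ f (x, y) = f (x₀, y₀) := by
  have hMy0 : 0 ≤ My := hMy ▸ norm_nonneg _
  have hLx0 : 0 ≤ Lx := hLx ▸ norm_nonneg _
  have hKx0 : 0 ≤ Kx := by
    have := hKx x₀ (mem_ball_self hrx); simpa using this
  have hKy0 : 0 ≤ Ky := by
    have := hKy (x₀, y₀) ⟨mem_ball_self hrx, mem_ball_self hry⟩; simpa using this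
  have hMypos : 0 < My := by
    rcases hMy0.lt_or_eq with h | h
    · exact h
    · exfalso
      rw [← h, div_zero] at hineq1
      nlinarith [mul_nonneg hKx0 hrx.le, mul_nonneg hKy0 hry.le,
        mul_nonneg hLx0 hrx.le]
  have hq1 : My * Ky < 1 := hineq2
  have hq0 : 0 ≤ My * Ky := mul_nonneg hMy0 hKy0
  -- differentiability
  have hopen : IsOpen (U ×ˢ V) := hU.prod hV
  have hdiff : ∀ p ∈ U ×ˢ V, HasFDerivAt f (fderiv ℝ f p) p := fun p hp =>
    ((hf.differentiableOn one_ne_zero).differentiableAt (hopen.mem_nhds hp)).hasFDerivAt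
  intro x hx
  set c := f (x₀, y₀) with hc
  set g : (Fin m → ℝ) → (Fin m → ℝ) := fun y => y - A.symm (f (x, y) - c) with hg
  -- mean value estimate in the y-direction
  have mvt : ∀ y ∈ ball y₀ ry, ∀ y' ∈ ball y₀ ry,
      ‖f (x, y) - f (x, y') - A (y - y')‖ ≤ Ky * ‖y - y'‖ := by
    intro y hy y' hy'
    exact (convex_ball y₀ ry).norm_image_sub_le_of_norm_hasFDerivWithin_le'
      (f' := fun y => (fderiv ℝ f (x, y)).comp (inr ℝ (Fin n → ℝ) (Fin m → ℝ)))
      (φ := (A : (Fin m → ℝ) →L[ℝ] (Fin m → ℝ)))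
      (fun z hz => ((hdiff (x, z) ⟨hballx hx, hbally hz⟩).comp z
        (hasFDerivAt_prodMk_right x z)).hasFDerivWithinAt)
      (fun z hz => by rw [hA]; exact hKy (x, z) ⟨hx, hz⟩) hy' hy
  -- Lipschitz estimate for g on the ball
  have key : ∀ y ∈ ball y₀ ry, ∀ y' ∈ ball y₀ ry,
      ‖g y - g y'‖ ≤ (My * Ky) * ‖y - y'‖ := by
    intro y hy y' hy'
    have heq : g y - g y' = A.symm (A (y - y') - (f (x, y) - f (x, y'))) := by
      simp only [hg, map_sub, A.symm_apply_apply]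
      abel
    rw [heq]
    calc ‖(A.symm : (Fin m → ℝ) →L[ℝ] (Fin m → ℝ)) (A (y - y') - (f (x, y) - f (x, y')))‖
        ≤ My * ‖A (y - y') - (f (x, y) - f (x, y'))‖ := by
          rw [hMy]; exact (A.symm : (Fin m → ℝ) →L[ℝ] (Fin m → ℝ)).le_opNorm _
      _ ≤ My * (Ky * ‖y - y'‖) := by
          refine mul_le_mul_of_nonneg_left ?_ hMy0
          rw [norm_sub_rev]
          exact mvt y hy y' hy'
      _ = (My * Ky) * ‖y - y'‖ := by ring
  -- bound on ‖g y₀ - y₀‖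
  have hxmvt : ‖f (x, y₀) - c‖ ≤ (Kx + Lx) * ‖x - x₀‖ := by
    refine (convex_ball x₀ rx).norm_image_sub_le_of_norm_hasFDerivWithin_le
      (f' := fun z => (fderiv ℝ f (z, y₀)).comp (inl ℝ (Fin n → ℝ) (Fin m → ℝ)))
      (fun z hz => ((hdiff (z, y₀) ⟨hballx hz, hy₀⟩).comp z
        (hasFDerivAt_prodMk_left z y₀)).hasFDerivWithinAt)
      (fun z hz => ?_) (mem_ball_self hrx) hx
    have h1 := hKx z hz
    have h2 := norm_sub_norm_le ((fderiv ℝ f (z, y₀)).comp (inl ℝ (Fin n → ℝ) (Fin m → ℝ)))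
      ((fderiv ℝ f (x₀, y₀)).comp (inl ℝ (Fin n → ℝ) (Fin m → ℝ)))
    rw [← hLx] at h2
    linarith
  have hgy₀ : ‖g y₀ - y₀‖ ≤ My * (Lx + Kx) * rx := by
    have : g y₀ - y₀ = -(A.symm (f (x, y₀) - c)) := by simp [hg]
    rw [this, norm_neg]
    calc ‖(A.symm : (Fin m → ℝ) →L[ℝ] (Fin m → ℝ)) (f (x, y₀) - c)‖
        ≤ My * ‖f (x, y₀) - c‖ := by
          rw [hMy]; exact (A.symm : (Fin m → ℝ) →L[ℝ] (Fin m → ℝ)).le_opNorm _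
      _ ≤ My * ((Kx + Lx) * ‖x - x₀‖) := mul_le_mul_of_nonneg_left hxmvt hMy0
      _ ≤ My * ((Kx + Lx) * rx) := by
          refine mul_le_mul_of_nonneg_left
            (mul_le_mul_of_nonneg_left ?_ (by linarith)) hMy0
          rw [← dist_eq_norm]; exact (mem_ball.mp hx).le
      _ = My * (Lx + Kx) * rx := by ring
  -- the invariant closed ball
  set B := My * (Lx + Kx) * rx with hB
  have hB0 : 0 ≤ B := by
    apply mul_nonneg (mul_nonneg hMy0 (by linarith)) hrx.le
  have honeq : 0 < 1 - My * Ky := by linarith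
  set r' := B / (1 - My * Ky) with hr'
  have hr'0 : 0 ≤ r' := div_nonneg hB0 honeq.le
  have hBr' : B = (1 - My * Ky) * r' := by
    rw [hr']; field_simp
  have hr'ry : r' < ry := by
    rw [hr', div_lt_iff₀ honeq]
    have h1 : My * (Kx * rx + Ky * ry) < My * (ry / My - Lx * rx) :=
      mul_lt_mul_of_pos_left hineq1 hMypos
    have h2 : My * (ry / My) = ry := by field_simp
    nlinarith
  have hsub : closedBall y₀ r' ⊆ ball y₀ ry := closedBall_subset_ball hr'ry
  have hy₀s : y₀ ∈ closedBall y₀ r' := mem_closedBall_self hr'0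
  -- g maps the closed ball to itself
  have hmaps : Set.MapsTo g (closedBall y₀ r') (closedBall y₀ r') := by
    intro y hy
    rw [mem_closedBall, dist_eq_norm]
    have h1 : ‖g y - g y₀‖ ≤ (My * Ky) * ‖y - y₀‖ :=
      key y (hsub hy) y₀ (mem_ball_self hry)
    have h2 : ‖y - y₀‖ ≤ r' := by
      rw [← dist_eq_norm]; exact mem_closedBall.mp hy
    have h3 : ‖g y - y₀‖ ≤ ‖g y - g y₀‖ + ‖g y₀ - y₀‖ := norm_sub_le_norm_sub_add_norm_sub _ _ _
    have h4 : (My * Ky) * ‖y - y₀‖ ≤ (My * Ky) * r' := mul_le_mul_of_nonneg_left h2 hq0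
    have h5 : ‖g y₀ - y₀‖ ≤ (1 - My * Ky) * r' := hBr' ▸ hgy₀
    linarith
  -- contraction
  set K : NNReal := ⟨My * Ky, hq0⟩ with hK
  have hKcoe : (K : ℝ) = My * Ky := rfl
  have hcontr : ContractingWith K (hmaps.restrict g _ _) := by
    constructor
    · rw [← NNReal.coe_lt_one, hKcoe]; exact hq1
    · apply LipschitzWith.of_dist_le_mul
      rintro ⟨y, hy⟩ ⟨y', hy'⟩
      simp only [Subtype.dist_eq, Set.MapsTo.val_restrict_apply]
      rw [dist_eq_norm, dist_eq_norm, hKcoe]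
      exact key y (hsub hy) y' (hsub hy')
  obtain ⟨y, hys, hfix, -, -⟩ := hcontr.exists_fixedPoint'
    isClosed_closedBall.isComplete hmaps hy₀s (edist_ne_top _ _)
  have hysol : f (x, y) = c := by
    have h0 : A.symm (f (x, y) - c) = 0 := by
      have := hfix
      rw [Function.IsFixedPt, hg] at this
      simpa [sub_eq_self] using this
    have := A.symm.map_eq_zero_iff.mp h0
    exact sub_eq_zero.mp this
  refine ⟨y, ⟨hsub hys, hysol⟩, ?_⟩
  rintro y' ⟨hy', hsol'⟩
  have hfix' : g y' = y' := by simp [hg, hsol']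
  have hfixy : g y = y := hfix
  have h1 : ‖y' - y‖ ≤ (My * Ky) * ‖y' - y‖ := by
    calc ‖y' - y‖ = ‖g y' - g y‖ := by rw [hfix', hfixy]
      _ ≤ (My * Ky) * ‖y' - y‖ := key y' hy' y (hsub hys)
  have : (1 - My * Ky) * ‖y' - y‖ ≤ 0 := by linarith
  have hnorm : ‖y' - y‖ ≤ 0 := by
    by_contra h
    push_neg at h
    nlinarith
  have : y' - y = 0 := norm_le_zero_iff.mp hnorm
  exact sub_eq_zero.mp this
end

section
/- Let f(A,P) = AᵀP + PA + Q − P B R⁻¹ Bᵀ P, defined on pairs of an n×n matrix A and a symmetric n×n matrix P, with fixed Q positive semidefinite and R positive definite. Then the partial derivative of f with respect to P at (A₀,P₀) is the linear map μ ↦ A_cᵀ μ + μ A_c, where A_c = A₀ − B R⁻¹ Bᵀ P₀; in particular if A_c is Hurwitz this partial derivative is an isomorphism of the space of symmetric matrices. -/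
open Matrix

open Matrix Polynomial

lemma aux_det_eval {n : ℕ} (M : Matrix (Fin n) (Fin n) ℂ) (z : ℂ) :
    (algebraMap ℂ (Matrix (Fin n) (Fin n) ℂ) z - M).det = M.charpoly.eval z := by
  rw [Matrix.charpoly, ← Polynomial.coe_evalRingHom, RingHom.map_det]
  congr 1
  ext i j
  by_cases h : i = j <;>
    simp [h, Matrix.charmatrix_apply, Matrix.algebraMap_matrix_apply, Matrix.diagonal_apply]

/-- spectrum of a complex matrix = roots of its charpoly -/
lemma aux_spectrum_iff {n : ℕ} (M : Matrix (Fin n) (Fin n) ℂ) (z : ℂ) :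
    z ∈ spectrum ℂ M ↔ M.charpoly.eval z = 0 := by
  rw [spectrum.mem_iff, Matrix.isUnit_iff_isUnit_det, isUnit_iff_ne_zero, not_not, aux_det_eval]

lemma aux_spectrum_transpose {n : ℕ} (M : Matrix (Fin n) (Fin n) ℂ) :
    spectrum ℂ Mᵀ = spectrum ℂ M := by
  ext z
  rw [spectrum.mem_iff, spectrum.mem_iff, Matrix.isUnit_iff_isUnit_det,
    Matrix.isUnit_iff_isUnit_det]
  have h : algebraMap ℂ (Matrix (Fin n) (Fin n) ℂ) z - Mᵀ
      = (algebraMap ℂ (Matrix (Fin n) (Fin n) ℂ) z - M)ᵀ := by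
    rw [Matrix.transpose_sub]
    congr 1
    rw [Algebra.algebraMap_eq_smul_one, Matrix.transpose_smul, Matrix.transpose_one]
  rw [h, Matrix.det_transpose]

lemma aux_intertwine {n : ℕ} (a b m : Matrix (Fin n) (Fin n) ℂ) (h : a * m = m * b)
    (p : ℂ[X]) : (aeval a p) * m = m * (aeval b p) := by
  induction p using Polynomial.induction_on' with
  | add p q hp hq => simp only [map_add, add_mul, mul_add, hp, hq]
  | monomial k c =>
    have hk : a ^ k * m = m * b ^ k := by
      induction k with
      | zero => simp
      | succ k ih => rw [pow_succ, pow_succ, mul_assoc, h, ← mul_assoc, ih, mul_assoc]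
    simp only [aeval_monomial, Algebra.algebraMap_eq_smul_one, smul_mul_assoc, one_mul,
      mul_smul_comm, hk]

lemma aux_lyap_inj {n : ℕ} (Ac : Matrix (Fin n) (Fin n) ℝ)
    (hH : ∀ μ ∈ spectrum ℂ (Ac.map (Complex.ofReal)), μ.re < 0)
    (μ : Matrix (Fin n) (Fin n) ℝ) (h : Acᵀ * μ + μ * Ac = 0) : μ = 0 := by
  rcases Nat.eq_zero_or_pos n with hn | hn
  · subst hn; exact Subsingleton.elim _ _
  have : NeZero n := ⟨hn.ne'⟩
  set C : Matrix (Fin n) (Fin n) ℂ := Ac.map (Complex.ofReal) with hCdef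
  set M : Matrix (Fin n) (Fin n) ℂ := μ.map (Complex.ofReal) with hMdef
  have hCM : Cᵀ * M = M * (-C) := by
    have h2 : Cᵀ * M + M * C = 0 := by
      have := congrArg (fun X : Matrix (Fin n) (Fin n) ℝ =>
        X.map (Complex.ofRealHom : ℝ →+* ℂ)) h
      simp [Matrix.map_add, Matrix.map_mul, Matrix.transpose_map] at this; exact this
    rw [mul_neg, eq_neg_iff_add_eq_zero.mpr h2]
  set p : Polynomial ℂ := (Cᵀ).charpoly with hp
  have h0 : Polynomial.aeval Cᵀ p = 0 := Matrix.aeval_self_charpoly _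
  have key : M * (Polynomial.aeval (-C) p) = 0 := by
    rw [← aux_intertwine _ _ _ hCM p, h0, zero_mul]
  have hdeg : 0 < p.degree := by
    rw [hp, Matrix.charpoly_degree_eq_dim]
    simp only [Fintype.card_fin]
    exact_mod_cast hn
  have hu : IsUnit (Polynomial.aeval (-C) p) := by
    by_contra hnu
    have h0s : (0 : ℂ) ∈ spectrum ℂ (Polynomial.aeval (-C) p) :=
      (spectrum.zero_mem_iff ℂ).mpr hnu
    rw [spectrum.map_polynomial_aeval_of_degree_pos (-C) p hdeg] at h0s
    obtain ⟨z, hz, hpz⟩ := h0s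
    have h1 : -z ∈ spectrum ℂ C := by
      rw [← spectrum.neg_eq] at hz
      exact Set.mem_neg.mp hz
    have h2 : z ∈ spectrum ℂ Cᵀ := (aux_spectrum_iff _ _).mpr hpz
    rw [aux_spectrum_transpose] at h2
    have ha := hH (-z) h1
    have hb := hH z h2
    simp only [Complex.neg_re] at ha
    linarith
  obtain ⟨u, hu'⟩ := hu
  have hM0 : M = 0 := by
    have : M * (u : Matrix (Fin n) (Fin n) ℂ) = 0 := by rw [hu']; exact key
    exact (Units.mul_left_eq_zero u).mp this
  ext i j
  have := congrFun (congrFun (hMdef ▸ hM0) i) j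
  simpa [Matrix.map_apply] using this


attribute [local instance] Matrix.normedAddCommGroup Matrix.normedSpace

/-- The partial derivative in `P` of the Riccati map
`f(A,P) = AᵀP + PA + Q − P B R⁻¹ Bᵀ P` at `(A₀, P₀)` (with `P₀` symmetric) is the
Lyapunov map `μ ↦ A_cᵀ μ + μ A_c` where `A_c = A₀ − B R⁻¹ Bᵀ P₀`; if `A_c` is Hurwitz
this map is an isomorphism of the space of symmetric matrices. -/
theorem statement_14 {n m : ℕ}
    (Q : Matrix (Fin n) (Fin n) ℝ) (hQ : Q.PosSemidef)
    (R : Matrix (Fin m) (Fin m) ℝ) (hR : R.PosDef)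
    (B : Matrix (Fin n) (Fin m) ℝ)
    (A₀ P₀ : Matrix (Fin n) (Fin n) ℝ) (hP₀ : P₀.IsSymm)
    (Ac : Matrix (Fin n) (Fin n) ℝ) (hAc : Ac = A₀ - B * R⁻¹ * Bᵀ * P₀)
    (Φ : Matrix (Fin n) (Fin n) ℝ →L[ℝ] Matrix (Fin n) (Fin n) ℝ)
    (hΦ : ∀ μ, Φ μ = Acᵀ * μ + μ * Ac) :
    HasFDerivAt (fun P : Matrix (Fin n) (Fin n) ℝ =>
      A₀ᵀ * P + P * A₀ + Q - P * B * R⁻¹ * Bᵀ * P) Φ P₀ ∧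
    ((∀ μ ∈ spectrum ℂ (Ac.map (Complex.ofReal)), μ.re < 0) →
      Set.BijOn (⇑Φ) {μ : Matrix (Fin n) (Fin n) ℝ | μ.IsSymm}
        {v : Matrix (Fin n) (Fin n) ℝ | v.IsSymm}) := by
  have hRT : Rᵀ = R := by
    have := hR.1
    rwa [Matrix.IsHermitian, Matrix.conjTranspose_eq_transpose_of_trivial] at this
  constructor
  · -- the derivative
    let b : Matrix (Fin n) (Fin n) ℝ →ₗ[ℝ] Matrix (Fin n) (Fin n) ℝ →ₗ[ℝ] Matrix (Fin n) (Fin n) ℝ :=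
      LinearMap.mk₂ ℝ (fun P P' => P * B * R⁻¹ * Bᵀ * P')
      (fun P1 P2 P' => by simp [Matrix.add_mul])
      (fun c P P' => by simp [Matrix.smul_mul])
      (fun P P1 P2 => by simp [Matrix.mul_add])
      (fun c P P' => by simp [Matrix.mul_smul])
    let b1 : Matrix (Fin n) (Fin n) ℝ →ₗ[ℝ] (Matrix (Fin n) (Fin n) ℝ →L[ℝ] Matrix (Fin n) (Fin n) ℝ) :=
      { toFun := fun P => LinearMap.toContinuousLinearMap (b P)
        map_add' := fun P1 P2 => by ext x; simp
        map_smul' := fun c P => by ext x; simp }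
    let b2 := LinearMap.toContinuousLinearMap b1
    have hquad : HasFDerivAt (fun P : Matrix (Fin n) (Fin n) ℝ => b2 P P)
        (b2.precompR (Matrix (Fin n) (Fin n) ℝ) P₀ (ContinuousLinearMap.id ℝ _)
          + b2.precompL (Matrix (Fin n) (Fin n) ℝ) (ContinuousLinearMap.id ℝ _) P₀) P₀ :=
      b2.hasFDerivAt_of_bilinear (hasFDerivAt_id P₀) (hasFDerivAt_id P₀)
    let ℓ : Matrix (Fin n) (Fin n) ℝ →ₗ[ℝ] Matrix (Fin n) (Fin n) ℝ :=
      { toFun := fun P => A₀ᵀ * P + P * A₀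
        map_add' := fun P1 P2 => by noncomm_ring
        map_smul' := fun c P => by simp [Matrix.mul_smul, Matrix.smul_mul] }
    have hlin : HasFDerivAt (fun P : Matrix (Fin n) (Fin n) ℝ => A₀ᵀ * P + P * A₀)
        (LinearMap.toContinuousLinearMap ℓ) P₀ :=
      (LinearMap.toContinuousLinearMap ℓ).hasFDerivAt
    have htot := (hlin.add_const Q).sub hquad
    have hEq : Φ = @HSub.hSub _ _ _ instHSub (LinearMap.toContinuousLinearMap ℓ)
        (b2.precompR (Matrix (Fin n) (Fin n) ℝ) P₀ (ContinuousLinearMap.id ℝ _)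
          + b2.precompL (Matrix (Fin n) (Fin n) ℝ) (ContinuousLinearMap.id ℝ _) P₀) := by
      refine ContinuousLinearMap.ext fun μ => ?_
      rw [hΦ]
      show Acᵀ * μ + μ * Ac
        = (A₀ᵀ * μ + μ * A₀) - (P₀ * B * R⁻¹ * Bᵀ * μ + μ * B * R⁻¹ * Bᵀ * P₀)
      rw [hAc]
      have hKT : (B * R⁻¹ * Bᵀ * P₀)ᵀ = P₀ * (B * R⁻¹ * Bᵀ) := by
        rw [Matrix.transpose_mul, Matrix.transpose_mul, Matrix.transpose_mul,
          Matrix.transpose_nonsing_inv, hRT, Matrix.transpose_transpose, hP₀.eq]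
        simp only [Matrix.mul_assoc]
      rw [Matrix.transpose_sub, hKT]
      simp only [Matrix.sub_mul, Matrix.mul_sub, Matrix.mul_assoc]
      abel
    rw [hEq]
    exact htot
  · -- bijectivity on symmetric matrices
    intro hH
    have hinj : Function.Injective (⇑Φ) := by
      intro x y hxy
      have h0 : Φ (x - y) = 0 := by rw [map_sub, hxy, sub_self]
      rw [hΦ] at h0
      have := aux_lyap_inj Ac hH (x - y) h0
      exact sub_eq_zero.mp this
    have hsurj : Function.Surjective (⇑Φ) := by
      have : Function.Injective (Φ : Matrix (Fin n) (Fin n) ℝ →ₗ[ℝ] Matrix (Fin n) (Fin n) ℝ) := hinj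
      exact (LinearMap.injective_iff_surjective).mp this
    have hΦT : ∀ μ : Matrix (Fin n) (Fin n) ℝ, Φ μᵀ = (Φ μ)ᵀ := by
      intro μ
      rw [hΦ, hΦ, Matrix.transpose_add, Matrix.transpose_mul, Matrix.transpose_mul,
        Matrix.transpose_transpose]
      exact add_comm _ _
    refine ⟨fun μ hμ => ?_, hinj.injOn, fun v hv => ?_⟩
    · show (Φ μ).IsSymm
      rw [Matrix.IsSymm, ← hΦT, hμ.eq]
    · obtain ⟨μ, hμv⟩ := hsurj v
      have hsym : μᵀ = μ := by
        apply hinj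
        rw [hΦT, hμv, hv.eq]
      exact ⟨μ, hsym, hμv⟩
end
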